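/- Let Φ : ℝⁿ → [0,∞) be a finite-valued, differentiable n-dimensional Young function satisfying Φ(ξ)/|ξ| → +∞ as |ξ| → ∞, and let Φ_• be its Young conjugate. Then for every ε ∈ (0,1) and every ξ ∈ ℝⁿ one has (ε/(1−ε)) Φ_•(∇Φ((1−ε)ξ)) ≤ Φ(ξ). -/

import Mathlib

open MeasureTheory Filter Topology
open scoped RealInnerProductSpace ENNReal

/-- An `n`-dimensional (finite-valued) Young function: an even, convex function
`Φ : ℝⁿ → [0,∞)` with `Φ(0) = 0` such that for every `t > 0` the sublevel set
`{ξ : Φ ξ < t}` is bounded and is a neighborhood of `0`. -/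
structure IsYoungFunction {n : ℕ} (Φ : EuclideanSpace ℝ (Fin n) → ℝ) : Prop where
  nonneg : ∀ ξ, 0 ≤ Φ ξ
  even : ∀ ξ, Φ (-ξ) = Φ ξ
  convex : ConvexOn ℝ Set.univ Φ
  map_zero : Φ 0 = 0
  sublevel_bounded : ∀ t > 0, Bornology.IsBounded {ξ | Φ ξ < t}
  sublevel_mem_nhds : ∀ t > 0, {ξ | Φ ξ < t} ∈ 𝓝 (0 : EuclideanSpace ℝ (Fin n))

/-- The Young conjugate `Φ_•(η) = sup_ξ (ξ·η − Φ(ξ))`, with values in `[0,∞]`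
(the supremum is always nonnegative, since `ξ = 0` contributes `0`). -/
noncomputable def youngConj {n : ℕ} (Φ : EuclideanSpace ℝ (Fin n) → ℝ)
    (η : EuclideanSpace ℝ (Fin n)) : ℝ≥0∞ :=
  ⨆ ξ : EuclideanSpace ℝ (Fin n), ENNReal.ofReal (⟪ξ, η⟫ - Φ ξ)

lemma grad_convex_ineq {n : ℕ} (f : EuclideanSpace ℝ (Fin n) → ℝ)
    (hc : ConvexOn ℝ Set.univ f) (hd : Differentiable ℝ f)
    (x y : EuclideanSpace ℝ (Fin n)) :
    f x + ⟪gradient f x, y - x⟫ ≤ f y := by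
  set g : ℝ → ℝ := fun t => f (x + t • (y - x)) with hg
  have hgc : ConvexOn ℝ Set.univ g := by
    have h := hc.comp_affineMap (AffineMap.lineMap x y)
    have e : g = f ∘ (AffineMap.lineMap x y) := by
      funext t
      simp only [hg, Function.comp_apply, AffineMap.lineMap_apply_module]
      congr 1
      module
    rw [e]
    simpa using h
  have hder : ∀ t : ℝ, HasDerivAt g (⟪gradient f (x + t • (y - x)), y - x⟫) t := by
    intro t
    have h1 : HasDerivAt (fun t : ℝ => x + t • (y - x)) (y - x) t := by
      simpa using ((hasDerivAt_id t).smul_const (y - x)).const_add x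
    have h2 : HasFDerivAt f ((InnerProductSpace.toDual ℝ _) (gradient f (x + t • (y - x))))
        (x + t • (y - x)) :=
      (hd _).hasGradientAt.hasFDerivAt
    simpa [hg, Function.comp_def] using h2.comp_hasDerivAt t h1
  have hslope := hgc.deriv_le_slope (Set.mem_univ (0:ℝ)) (Set.mem_univ (1:ℝ))
    one_pos (hder 0).differentiableAt
  rw [(hder 0).deriv] at hslope
  simp only [zero_smul, add_zero, slope_def_field, hg, one_smul, sub_zero, div_one,
    add_sub_cancel] at hslope
  linarith [hslope]

/-- For a differentiable finite-valued `n`-dimensional Young function `Φ` with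
`Φ(ξ)/|ξ| → ∞` as `|ξ| → ∞`, for every `ε ∈ (0,1)` and `ξ ∈ ℝⁿ` one has
`(ε/(1−ε)) Φ_•(∇Φ((1−ε)ξ)) ≤ Φ(ξ)`. -/
theorem conj_gradient_scaled_le {n : ℕ}
    (Φ : EuclideanSpace ℝ (Fin n) → ℝ) (hY : IsYoungFunction Φ)
    (hdiff : Differentiable ℝ Φ)
    (hinf : Tendsto (fun ξ => Φ ξ / ‖ξ‖)
      (Bornology.cobounded (EuclideanSpace ℝ (Fin n))) atTop)
    (ε : ℝ) (hε : ε ∈ Set.Ioo (0 : ℝ) 1) (ξ : EuclideanSpace ℝ (Fin n)) :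
    ENNReal.ofReal (ε / (1 - ε)) * youngConj Φ (gradient Φ ((1 - ε) • ξ)) ≤
      ENNReal.ofReal (Φ ξ) := by
  obtain ⟨hε0, hε1⟩ := hε
  have h1ε : (0:ℝ) < 1 - ε := by linarith
  set x := (1 - ε) • ξ with hx
  set η := gradient Φ x with hη
  have key : ∀ ζ, ⟪ζ, η⟫ - Φ ζ ≤ ⟪x, η⟫ - Φ x := by
    intro ζ
    have h1 := grad_convex_ineq Φ hY.convex hdiff x ζ
    have h2 : ⟪gradient Φ x, ζ - x⟫ = ⟪ζ, η⟫ - ⟪x, η⟫ := by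
      rw [real_inner_comm, inner_sub_left]
    linarith [h1, h2.ge, h2.le]
  have hconj : youngConj Φ η ≤ ENNReal.ofReal (⟪x, η⟫ - Φ x) :=
    iSup_le fun ζ => ENNReal.ofReal_le_ofReal (key ζ)
  have hreal : ε / (1 - ε) * (⟪x, η⟫ - Φ x) ≤ Φ ξ := by
    have hgi := grad_convex_ineq Φ hY.convex hdiff x ξ
    have e1 : ξ - x = ε • ξ := by rw [hx]; module
    have e2 : ⟪η, ξ - x⟫ = ε * ⟪η, ξ⟫ := by rw [e1, real_inner_smul_right]
    have e3 : ⟪x, η⟫ = (1 - ε) * ⟪η, ξ⟫ := by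
      rw [hx, real_inner_smul_left, real_inner_comm]
    have hΦx := hY.nonneg x
    have hnn : 0 ≤ ε / (1 - ε) := le_of_lt (div_pos hε0 h1ε)
    have h5 : ε / (1 - ε) * (⟪x, η⟫ - Φ x) = ε * ⟪η, ξ⟫ - ε / (1 - ε) * Φ x := by
      rw [e3]; field_simp
    rw [← hη] at hgi
    linarith [hgi, e2.symm.le, e2.le, h5.le, h5.ge, mul_nonneg hnn hΦx]
  calc ENNReal.ofReal (ε / (1 - ε)) * youngConj Φ η
      ≤ ENNReal.ofReal (ε / (1 - ε)) * ENNReal.ofReal (⟪x, η⟫ - Φ x) :=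
        mul_le_mul_right hconj _
    _ = ENNReal.ofReal (ε / (1 - ε) * (⟪x, η⟫ - Φ x)) :=
        (ENNReal.ofReal_mul (by positivity)).symm
    _ ≤ ENNReal.ofReal (Φ ξ) := ENNReal.ofReal_le_ofReal hreal
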